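/- arXiv:2301.02520 — 2 statements merged into one kernel-verified Lean document; each statement's English description precedes it below -/
import Mathlib

section
/- Let X be a real Banach space, D ⊆ X a linear subspace and A : D → X a linear map. Let T : (0,∞) → (X →L X) be a family of bounded linear operators such that for every τ > 0 and every x ∈ X one has T(τ)x ∈ D and ‖A(T(τ)x)‖ ≤ (l₀/τ)·‖x‖, where l₀ ≥ 0 is a constant. Let T₀ > 0, η ∈ (0,1], l ≥ 0 and let B : [0,T₀] → X satisfy ‖B(t) − B(s)‖ ≤ l·|t−s|^η for all t, s ∈ [0,T₀]. Fix t ∈ (0,T₀]. Then the function g : [0,t) → X defined by g(s) = A(T(t−s)(B(s) − B(t))) satisfies the bound ‖g(s)‖ ≤ l·l₀·(t−s)^(η−1) for all s ∈ [0,t); consequently, if g is continuous on [0,t), it is Bochner integrable on (0,t) and ‖∫₀ᵗ g(s) ds‖ ≤ l·l₀·t^η/η. -/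
open MeasureTheory

/-- Key estimate in the proof of the regularity lemma: the integrand
s ↦ A T(t−s)(B(s) − B(t)) is bounded by l·l₀·(t−s)^(η−1), hence (if continuous)
Bochner integrable over (0,t) with ‖∫₀ᵗ g‖ ≤ l·l₀·t^η/η. -/
theorem regularity_integrand_bound
    (X : Type*) [NormedAddCommGroup X] [NormedSpace ℝ X] [CompleteSpace X]
    (D : Submodule ℝ X) (A : D →ₗ[ℝ] X)
    (T : ℝ → X →L[ℝ] X) (l₀ : ℝ) (hl₀ : 0 ≤ l₀)
    (hmem : ∀ τ : ℝ, 0 < τ → ∀ x : X, T τ x ∈ D)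
    (hAbound : ∀ (τ : ℝ) (hτ : 0 < τ) (x : X),
      ‖A ⟨T τ x, hmem τ hτ x⟩‖ ≤ l₀ / τ * ‖x‖)
    (T₀ : ℝ) (hT₀ : 0 < T₀) (η : ℝ) (hη : η ∈ Set.Ioc (0 : ℝ) 1) (l : ℝ) (hl : 0 ≤ l)
    (B : ℝ → X)
    (hB : ∀ t ∈ Set.Icc (0 : ℝ) T₀, ∀ s ∈ Set.Icc (0 : ℝ) T₀,
      ‖B t - B s‖ ≤ l * |t - s| ^ η)
    (t : ℝ) (ht : t ∈ Set.Ioc (0 : ℝ) T₀)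
    (g : ℝ → X)
    (hg : ∀ s : ℝ, ∀ hs : s ∈ Set.Ico (0 : ℝ) t,
      g s = A ⟨T (t - s) (B s - B t), hmem (t - s) (sub_pos.mpr hs.2) (B s - B t)⟩) :
    (∀ s ∈ Set.Ico (0 : ℝ) t, ‖g s‖ ≤ l * l₀ * (t - s) ^ (η - 1)) ∧
    (ContinuousOn g (Set.Ico 0 t) →
      IntegrableOn g (Set.Ioo 0 t) volume ∧
      ‖∫ s in Set.Ioo (0 : ℝ) t, g s‖ ≤ l * l₀ * t ^ η / η) := by
  obtain ⟨ht0, htT⟩ := ht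
  obtain ⟨hη0, hη1⟩ := hη
  -- pointwise bound
  have hbound : ∀ s ∈ Set.Ico (0 : ℝ) t, ‖g s‖ ≤ l * l₀ * (t - s) ^ (η - 1) := by
    intro s hs
    have hts : 0 < t - s := sub_pos.mpr hs.2
    have hsIcc : s ∈ Set.Icc (0 : ℝ) T₀ := ⟨hs.1, le_trans hs.2.le htT⟩
    have htIcc : t ∈ Set.Icc (0 : ℝ) T₀ := ⟨ht0.le, htT⟩
    rw [hg s hs]
    calc ‖A ⟨T (t - s) (B s - B t), hmem (t - s) hts (B s - B t)⟩‖
        ≤ l₀ / (t - s) * ‖B s - B t‖ := hAbound (t - s) hts (B s - B t)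
      _ ≤ l₀ / (t - s) * (l * |s - t| ^ η) := by
          apply mul_le_mul_of_nonneg_left (hB s hsIcc t htIcc)
          positivity
      _ = l * l₀ * (t - s) ^ (η - 1) := by
          rw [abs_sub_comm, abs_of_pos hts, Real.rpow_sub hts, Real.rpow_one]
          field_simp
  refine ⟨hbound, fun hcont => ?_⟩
  -- the dominating function
  set φ : ℝ → ℝ := fun s => l * l₀ * (t - s) ^ (η - 1) with hφ
  have hφint : IntegrableOn φ (Set.Ioo 0 t) volume := by
    have h1 : IntervalIntegrable (fun u : ℝ => u ^ (η - 1)) volume 0 t :=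
      intervalIntegral.intervalIntegrable_rpow' (by linarith)
    have h2 : IntervalIntegrable (fun s : ℝ => (t - s) ^ (η - 1)) volume (t - 0) (t - t) :=
      h1.comp_sub_left t
    simp only [sub_self, sub_zero] at h2
    have h3 : IntervalIntegrable (fun s : ℝ => (t - s) ^ (η - 1)) volume 0 t := h2.symm
    have h4 : IntegrableOn (fun s : ℝ => (t - s) ^ (η - 1)) (Set.Ioc 0 t) volume := by
      rw [intervalIntegrable_iff, Set.uIoc_of_le ht0.le] at h3
      exact h3
    exact ((h4.mono_set Set.Ioo_subset_Ioc_self).const_mul (l * l₀))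
  have hmeas : AEStronglyMeasurable g (volume.restrict (Set.Ioo 0 t)) :=
    (hcont.mono Set.Ioo_subset_Ico_self).aestronglyMeasurable measurableSet_Ioo
  have hae : ∀ᵐ s ∂(volume.restrict (Set.Ioo (0:ℝ) t)), ‖g s‖ ≤ φ s := by
    rw [ae_restrict_iff' measurableSet_Ioo]
    exact Filter.Eventually.of_forall fun s hs =>
      hbound s ⟨hs.1.le, hs.2⟩
  have hint : IntegrableOn g (Set.Ioo 0 t) volume :=
    Integrable.mono' hφint hmeas hae
  refine ⟨hint, ?_⟩
  have hle : ‖∫ s in Set.Ioo (0:ℝ) t, g s‖ ≤ ∫ s in Set.Ioo (0:ℝ) t, φ s :=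
    norm_integral_le_of_norm_le hφint hae
  have hcalc : ∫ s in Set.Ioo (0:ℝ) t, φ s = l * l₀ * t ^ η / η := by
    have h1 : ∫ s in Set.Ioo (0:ℝ) t, φ s = ∫ s in (0:ℝ)..t, φ s := by
      rw [intervalIntegral.integral_of_le ht0.le, integral_Ioc_eq_integral_Ioo]
    rw [h1, hφ]
    rw [intervalIntegral.integral_const_mul]
    have h2 : ∫ s in (0:ℝ)..t, (t - s) ^ (η - 1)
        = ∫ u in (t - t)..(t - 0), u ^ (η - 1) := by
      rw [intervalIntegral.integral_comp_sub_left (fun u => u ^ (η - 1)) t]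
    rw [h2]
    simp only [sub_self, sub_zero]
    rw [integral_rpow (Or.inl (by linarith))]
    rw [Real.zero_rpow (by linarith)]
    field_simp
    rw [sub_add_cancel, sub_zero, mul_right_comm _ η, mul_div_cancel_right₀ _ hη0.ne']
  linarith [hle, hcalc.le, hcalc.ge]
end

section
/- Let X be a real Banach space, D ⊆ X a linear subspace and A : D → X a linear map whose graph is closed in X × X. Let T₀ > 0, η ∈ (0,1], l ≥ 0, l₀ ≥ 0, M ≥ 0, and let T : (0,∞) → (X →L X) and B : [0,T₀] → X be such that: (i) ‖B(t) − B(s)‖ ≤ l·|t−s|^η for all t, s ∈ [0,T₀]; (ii) for every τ > 0 and x ∈ X, T(τ)x ∈ D and ‖A(T(τ)x)‖ ≤ (l₀/τ)·‖x‖, and ‖T(τ)‖ ≤ M; (iii) for a fixed t ∈ (0,T₀], the maps s ↦ T(t−s)(B(s) − B(t)) and s ↦ A(T(t−s)(B(s) − B(t))) are continuous on [0,t); (iv) for every ε ∈ (0,t), the truncated integral w_ε := ∫₀^(t−ε) T(t−s)(B(s) − B(t)) ds belongs to D and A(w_ε) = ∫₀^(t−ε) A(T(t−s)(B(s) − B(t)))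 ds. Then the element w := ∫₀ᵗ T(t−s)(B(s) − B(t)) ds belongs to D and A(w) = ∫₀ᵗ A(T(t−s)(B(s) − B(t))) ds. -/
open MeasureTheory

/-- The closedness argument in the regularity lemma: since A is a closed operator and the
truncated integrals ∫₀^{t−ε} T(t−s)(B(s)−B(t)) ds lie in D with A commuting with them,
the full integral w = ∫₀ᵗ T(t−s)(B(s)−B(t)) ds lies in D and
A w = ∫₀ᵗ A T(t−s)(B(s)−B(t)) ds. -/
theorem closed_operator_integral
    (X : Type*) [NormedAddCommGroup X] [NormedSpace ℝ X] [CompleteSpace X]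
    (D : Submodule ℝ X) (A : D →ₗ[ℝ] X)
    (hclosed : IsClosed (Set.range fun d : D => ((d : X), A d)))
    (T : ℝ → X →L[ℝ] X) (B : ℝ → X)
    (T₀ η l l₀ M : ℝ) (hT₀ : 0 < T₀) (hη : η ∈ Set.Ioc (0 : ℝ) 1)
    (hl : 0 ≤ l) (hl₀ : 0 ≤ l₀) (hM : 0 ≤ M)
    (hB : ∀ t ∈ Set.Icc (0 : ℝ) T₀, ∀ s ∈ Set.Icc (0 : ℝ) T₀,
      ‖B t - B s‖ ≤ l * |t - s| ^ η)
    (hmem : ∀ τ : ℝ, 0 < τ → ∀ x : X, T τ x ∈ D)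
    (hAbound : ∀ (τ : ℝ) (hτ : 0 < τ) (x : X),
      ‖A ⟨T τ x, hmem τ hτ x⟩‖ ≤ l₀ / τ * ‖x‖)
    (hTnorm : ∀ τ : ℝ, 0 < τ → ‖T τ‖ ≤ M)
    (t : ℝ) (ht : t ∈ Set.Ioc (0 : ℝ) T₀)
    (g : ℝ → X)
    (hg : ∀ s : ℝ, ∀ hs : s ∈ Set.Ico (0 : ℝ) t,
      g s = A ⟨T (t - s) (B s - B t), hmem (t - s) (sub_pos.mpr hs.2) (B s - B t)⟩)
    (hcont₁ : ContinuousOn (fun s => T (t - s) (B s - B t)) (Set.Ico 0 t))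
    (hcont₂ : ContinuousOn g (Set.Ico 0 t))
    (htrunc : ∀ ε ∈ Set.Ioo (0 : ℝ) t,
      ∃ hw : (∫ s in Set.Ioo (0 : ℝ) (t - ε), T (t - s) (B s - B t)) ∈ D,
        A ⟨∫ s in Set.Ioo (0 : ℝ) (t - ε), T (t - s) (B s - B t), hw⟩
          = ∫ s in Set.Ioo (0 : ℝ) (t - ε), g s) :
    ∃ hw : (∫ s in Set.Ioo (0 : ℝ) t, T (t - s) (B s - B t)) ∈ D,
      A ⟨∫ s in Set.Ioo (0 : ℝ) t, T (t - s) (B s - B t), hw⟩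
        = ∫ s in Set.Ioo (0 : ℝ) t, g s := by
  have ht0 : (0 : ℝ) < t := ht.1
  have htT₀ : t ∈ Set.Icc (0 : ℝ) T₀ := ⟨ht0.le, ht.2⟩
  have hη0 : (0 : ℝ) < η := hη.1
  set f : ℝ → X := fun s => T (t - s) (B s - B t) with hf
  -- integrability of f on Ioo 0 t
  have hfmeas : AEStronglyMeasurable f (volume.restrict (Set.Ioo 0 t)) :=
    (hcont₁.mono Set.Ioo_subset_Ico_self).aestronglyMeasurable measurableSet_Ioo
  have hbd : ∀ s ∈ Set.Ioo (0 : ℝ) t, ‖B s - B t‖ ≤ l * (t - s) ^ η := by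
    intro s hs
    have hsT : s ∈ Set.Icc (0 : ℝ) T₀ := ⟨hs.1.le, hs.2.le.trans ht.2⟩
    have := hB s hsT t htT₀
    rwa [abs_of_nonpos (by linarith [hs.2]), neg_sub] at this
  have hfi : IntegrableOn f (Set.Ioo 0 t) := by
    refine Integrable.mono' (g := fun _ => M * (l * t ^ η))
      (integrableOn_const measure_Ioo_lt_top.ne) hfmeas ?_
    filter_upwards [ae_restrict_mem measurableSet_Ioo] with s hs
    have h1 : ‖f s‖ ≤ ‖T (t - s)‖ * ‖B s - B t‖ := (T (t - s)).le_opNorm _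
    have h2 : ‖T (t - s)‖ ≤ M := hTnorm _ (by linarith [hs.2])
    have h3 : ‖B s - B t‖ ≤ l * (t - s) ^ η := hbd s hs
    have h4 : (t - s) ^ η ≤ t ^ η :=
      Real.rpow_le_rpow (by linarith [hs.2]) (by linarith [hs.1]) hη0.le
    calc ‖f s‖ ≤ ‖T (t - s)‖ * ‖B s - B t‖ := h1
      _ ≤ M * (l * t ^ η) := by
          refine mul_le_mul h2 (h3.trans ?_) (norm_nonneg _) hM
          exact mul_le_mul_of_nonneg_left h4 hl
  -- integrability of g on Ioo 0 t
  have hgi : IntegrableOn g (Set.Ioo 0 t) := by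
    have hdom : IntegrableOn (fun s => l₀ * l * (t - s) ^ (η - 1)) (Set.Ioo 0 t) := by
      have h1 : IntervalIntegrable (fun x : ℝ => x ^ (η - 1)) volume 0 t :=
        intervalIntegral.intervalIntegrable_rpow' (by linarith)
      have h2 := (h1.comp_sub_left t).symm
      simp only [sub_zero, sub_self] at h2
      have h3 := (intervalIntegrable_iff_integrableOn_Ioo_of_le ht0.le).1 h2
      exact h3.const_mul _
    refine Integrable.mono' hdom
      ((hcont₂.mono Set.Ioo_subset_Ico_self).aestronglyMeasurable measurableSet_Ioo) ?_
    filter_upwards [ae_restrict_mem measurableSet_Ioo] with s hs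
    have hts : (0 : ℝ) < t - s := by linarith [hs.2]
    rw [hg s ⟨hs.1.le, hs.2⟩]
    calc ‖(A ⟨T (t - s) (B s - B t), _⟩ : X)‖
        ≤ l₀ / (t - s) * ‖B s - B t‖ := hAbound _ hts _
      _ ≤ l₀ / (t - s) * (l * (t - s) ^ η) := by
          exact mul_le_mul_of_nonneg_left (hbd s hs) (div_nonneg hl₀ hts.le)
      _ = l₀ * l * (t - s) ^ (η - 1) := by
          rw [Real.rpow_sub_one hts.ne']
          field_simp
  -- the approximating sets
  set c : ℕ → ℝ := fun n => t - t / (n + 2) with hc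
  set S : ℕ → Set ℝ := fun n => Set.Ioo 0 (c n) with hS
  have hεmem : ∀ n : ℕ, t / (n + 2) ∈ Set.Ioo (0 : ℝ) t := by
    intro n
    constructor
    · positivity
    · rw [div_lt_iff₀ (by positivity)]
      nlinarith [Nat.cast_nonneg (α := ℝ) n]
  have hmono : Monotone S := by
    intro m n hmn
    apply Set.Ioo_subset_Ioo le_rfl
    have : (t : ℝ) / (n + 2) ≤ t / (m + 2) := by
      apply div_le_div_of_nonneg_left ht0.le (by positivity)
      have : (m : ℝ) ≤ n := Nat.cast_le.2 hmn
      linarith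
    simp only [hc]
    linarith
  have hUnion : (⋃ n, S n) = Set.Ioo 0 t := by
    apply Set.Subset.antisymm
    · refine Set.iUnion_subset fun n => Set.Ioo_subset_Ioo le_rfl ?_
      have := (hεmem n).1
      simp only [hc]
      linarith
    · intro x hx
      obtain ⟨n, hn⟩ := exists_nat_gt (t / (t - x))
      refine Set.mem_iUnion.2 ⟨n, hx.1, ?_⟩
      have hx2 : (0 : ℝ) < t - x := by linarith [hx.2]
      have h1 : t / (t - x) < (n : ℝ) + 2 := by linarith [Nat.cast_nonneg (α := ℝ) n]
      have h2 : t / ((n : ℝ) + 2) < t - x := by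
        rw [div_lt_iff₀ (by positivity)]
        rw [div_lt_iff₀ hx2] at h1
        nlinarith
      simp only [hc]
      linarith
  have htendf : Filter.Tendsto (fun n => ∫ s in S n, f s) Filter.atTop
      (nhds (∫ s in Set.Ioo (0 : ℝ) t, f s)) := by
    have hfi' : IntegrableOn f (⋃ n, S n) := by rw [hUnion]; exact hfi
    have := tendsto_setIntegral_of_monotone (fun n => measurableSet_Ioo) hmono hfi'
    rwa [hUnion] at this
  have htendg : Filter.Tendsto (fun n => ∫ s in S n, g s) Filter.atTop
      (nhds (∫ s in Set.Ioo (0 : ℝ) t, g s)) := by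
    have hgi' : IntegrableOn g (⋃ n, S n) := by rw [hUnion]; exact hgi
    have := tendsto_setIntegral_of_monotone (fun n => measurableSet_Ioo) hmono hgi'
    rwa [hUnion] at this
  -- membership in the closed graph
  have hmemS : ((∫ s in Set.Ioo (0 : ℝ) t, f s), ∫ s in Set.Ioo (0 : ℝ) t, g s) ∈
      Set.range fun d : D => ((d : X), A d) := by
    refine hclosed.mem_of_tendsto (htendf.prodMk_nhds htendg) ?_
    filter_upwards with n
    obtain ⟨hw, hA⟩ := htrunc (t / (n + 2)) (hεmem n)
    exact ⟨⟨_, hw⟩, Prod.ext rfl hA⟩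
  obtain ⟨d, hd⟩ := hmemS
  have hd1 : (d : X) = ∫ s in Set.Ioo (0 : ℝ) t, f s := congrArg Prod.fst hd
  refine ⟨hd1 ▸ d.2, ?_⟩
  have : (⟨∫ s in Set.Ioo (0 : ℝ) t, f s, hd1 ▸ d.2⟩ : D) = d := by
    exact Subtype.ext hd1.symm
  rw [this]
  exact congrArg Prod.snd hd
end
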